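/- Let M be a metric space, p ∈ M, and γ : [0,1] → M a continuous based loop at p with bounded variation, and write [0,1] \ γ⁻¹(p) = ⊔ₙ (aₙ,bₙ) as a countable disjoint union of open intervals. Then rₙ := sup{ d(γ(t), p) : t ∈ [aₙ,bₙ] } satisfies rₙ → 0 as n → ∞. -/

import Mathlib

open Set

lemma aux_sum_var {M : Type*} [MetricSpace M] (γ : ℝ → M) :
    ∀ (F : Finset ℕ) (c d : ℝ) (a b : ℕ → ℝ),
      (∀ n ∈ F, a n < b n) → (∀ n ∈ F, Icc (a n) (b n) ⊆ Icc c d) →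
      (∀ m ∈ F, ∀ n ∈ F, m ≠ n → Disjoint (Ioo (a m) (b m)) (Ioo (a n) (b n))) →
      ∑ n ∈ F, eVariationOn γ (Icc (a n) (b n)) ≤ eVariationOn γ (Icc c d) := by
  intro F
  induction F using Finset.strongInduction with
  | _ F ih =>
    intro c d a b hlt hsub hd
    rcases F.eq_empty_or_nonempty with rfl | hne
    · simp
    · obtain ⟨m, hm, hmax⟩ := F.exists_max_image a hne
      have hcd : a m ∈ Icc c d := hsub m hm ⟨le_rfl, (hlt m hm).le⟩
      have key : ∀ n ∈ F, n ≠ m → b n ≤ a m := by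
        intro n hn hnm
        by_contra h
        push_neg at h
        have hdis := hd n hn m hm hnm
        have : (Ioo (a n) (b n) ∩ Ioo (a m) (b m)).Nonempty := by
          rw [Set.Ioo_inter_Ioo]
          refine Set.nonempty_Ioo.2 ?_
          have h1 : a n ≤ a m := hmax n hn
          simp only [lt_min_iff, max_lt_iff]
          exact ⟨⟨hlt n hn, h⟩, h1.trans_lt (hlt m hm), hlt m hm⟩
        exact this.not_disjoint hdis
      have split : eVariationOn γ (Icc c (a m)) + eVariationOn γ (Icc (a m) d)
          = eVariationOn γ (Icc c d) := by
        have := eVariationOn.Icc_add_Icc γ hcd.1 hcd.2 hcd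
        simpa [Set.Icc_inter_Icc, max_eq_left hcd.1, min_eq_right hcd.2,
          max_eq_right hcd.1, min_eq_left hcd.2, inf_of_le_left hcd.2,
          sup_of_le_right hcd.1] using this
      rw [← Finset.sum_erase_add F _ hm]
      have h1 : ∑ n ∈ F.erase m, eVariationOn γ (Icc (a n) (b n))
          ≤ eVariationOn γ (Icc c (a m)) := by
        refine ih (F.erase m) (Finset.erase_ssubset hm) c (a m) a b
          (fun n hn => hlt n (Finset.mem_of_mem_erase hn)) ?_
          (fun i hi j hj hij => hd i (Finset.mem_of_mem_erase hi) j
            (Finset.mem_of_mem_erase hj) hij)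
        intro n hn
        have hn' := Finset.mem_of_mem_erase hn
        have hb : b n ≤ a m := key n hn' (Finset.ne_of_mem_erase hn)
        intro x hx
        exact ⟨(hsub n hn' hx).1, hx.2.trans hb⟩
      have h2 : eVariationOn γ (Icc (a m) (b m)) ≤ eVariationOn γ (Icc (a m) d) := by
        refine eVariationOn.mono γ ?_
        intro x hx
        exact ⟨hx.1, hx.2.trans (hsub m hm ⟨(hlt m hm).le, le_rfl⟩).2⟩
      calc _ ≤ eVariationOn γ (Icc c (a m)) + eVariationOn γ (Icc (a m) d) :=
            add_le_add h1 h2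
        _ = _ := split

theorem stmt_19 {M : Type*} [MetricSpace M] (p : M) (γ : ℝ → M)
    (hγ : ContinuousOn γ (Icc 0 1)) (h0 : γ 0 = p) (h1 : γ 1 = p)
    (hbv : BoundedVariationOn γ (Icc 0 1))
    (a b : ℕ → ℝ) (hab : ∀ n, a n < b n ∧ Ioo (a n) (b n) ⊆ Icc (0 : ℝ) 1)
    (hdisj : Pairwise (Function.onFun Disjoint fun n => Ioo (a n) (b n)))
    (hunion : (⋃ n, Ioo (a n) (b n)) = {t ∈ Icc (0 : ℝ) 1 | γ t ≠ p}) :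
    Filter.Tendsto (fun n => ⨆ t : Icc (a n) (b n), dist (γ (t : ℝ)) p)
      Filter.atTop (nhds 0) := by
  -- endpoints map to p
  have hIccsub : ∀ n, Icc (a n) (b n) ⊆ Icc (0:ℝ) 1 := by
    intro n
    have := (hab n).2
    rw [← closure_Ioo (hab n).1.ne] at *
    exact closure_minimal (hab n).2 isClosed_Icc
  have hnotmem : ∀ n x, x = a n ∨ x = b n → x ∉ ⋃ m, Ioo (a m) (b m) := by
    intro n x hx hmem
    obtain ⟨m, hm⟩ := Set.mem_iUnion.1 hmem
    rcases eq_or_ne m n with rfl | hmn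
    · rcases hx with rfl | rfl
      · exact lt_irrefl _ hm.1
      · exact lt_irrefl _ hm.2
    · have hdis := hdisj hmn
      have : (Ioo (a m) (b m) ∩ Ioo (a n) (b n)).Nonempty := by
        rw [Set.Ioo_inter_Ioo]
        refine Set.nonempty_Ioo.2 ?_
        rcases hx with rfl | rfl
        · simp only [lt_min_iff, max_lt_iff]
          exact ⟨⟨hm.1.trans hm.2, hm.2⟩, hm.1.trans (hab n).1, (hab n).1⟩
        · simp only [lt_min_iff, max_lt_iff]
          exact ⟨⟨hm.1.trans hm.2, (hab n).1.trans hm.2⟩, hm.1, (hab n).1⟩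
      exact this.not_disjoint hdis
  have hend : ∀ n, γ (a n) = p ∧ γ (b n) = p := by
    intro n
    have ha : a n ∈ Icc (0:ℝ) 1 := hIccsub n ⟨le_rfl, (hab n).1.le⟩
    have hb : b n ∈ Icc (0:ℝ) 1 := hIccsub n ⟨(hab n).1.le, le_rfl⟩
    constructor
    · by_contra h
      exact hnotmem n (a n) (Or.inl rfl) (hunion ▸ Set.mem_setOf.2 ⟨ha, h⟩)
    · by_contra h
      exact hnotmem n (b n) (Or.inr rfl) (hunion ▸ Set.mem_setOf.2 ⟨hb, h⟩)
  -- variation bound: 2 * edist (γ t) p ≤ V n for t ∈ Icc (a n) (b n)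
  set V : ℕ → ENNReal := fun n => eVariationOn γ (Icc (a n) (b n)) with hV
  have hVle : ∀ n, V n ≤ eVariationOn γ (Icc (0:ℝ) 1) :=
    fun n => eVariationOn.mono γ (hIccsub n)
  have hVtop : ∀ n, V n ≠ ⊤ := fun n => lt_of_le_of_lt (hVle n) hbv.lt_top |>.ne
  have hdist : ∀ n, ∀ t ∈ Icc (a n) (b n), 2 * edist (γ t) p ≤ V n := by
    intro n t ht
    have hsplit := eVariationOn.Icc_add_Icc γ (s := Icc (a n) (b n)) ht.1 ht.2 ht
    rw [Set.inter_self] at hsplit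
    have e1 : edist (γ t) p ≤ eVariationOn γ (Icc (a n) (b n) ∩ Icc (a n) t) := by
      rw [← (hend n).1, edist_comm]
      exact eVariationOn.edist_le γ ⟨⟨le_rfl, (hab n).1.le⟩, le_rfl, ht.1⟩
        ⟨ht, ht.1, le_rfl⟩
    have e2 : edist (γ t) p ≤ eVariationOn γ (Icc (a n) (b n) ∩ Icc t (b n)) := by
      rw [← (hend n).2]
      exact eVariationOn.edist_le γ ⟨ht, le_rfl, ht.2⟩
        ⟨⟨(hab n).1.le, le_rfl⟩, ht.2, le_rfl⟩
    calc 2 * edist (γ t) p = edist (γ t) p + edist (γ t) p := two_mul _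
      _ ≤ _ + _ := add_le_add e1 e2
      _ = V n := hsplit
  -- summability of V
  have hsum : ∑' n, V n ≠ ⊤ := by
    have : ∑' n, V n ≤ eVariationOn γ (Icc (0:ℝ) 1) := by
      rw [ENNReal.tsum_eq_iSup_sum]
      refine iSup_le fun F => ?_
      exact aux_sum_var γ F 0 1 a b (fun n _ => (hab n).1)
        (fun n _ => hIccsub n) (fun m _ n _ h => hdisj h)
    exact (lt_of_le_of_lt this hbv.lt_top).ne
  have hV0 : Filter.Tendsto V Filter.atTop (nhds 0) :=
    ENNReal.tendsto_atTop_zero_of_tsum_ne_top hsum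
  have hVr : Filter.Tendsto (fun n => (V n).toReal) Filter.atTop (nhds 0) := by
    have := (ENNReal.tendsto_toReal (by simp : (0:ENNReal) ≠ ⊤)).comp hV0
    simpa [Function.comp_def] using this
  -- squeeze
  have hle : ∀ n, (⨆ t : Icc (a n) (b n), dist (γ (t : ℝ)) p) ≤ (V n).toReal := by
    intro n
    have hne : Nonempty (Icc (a n) (b n)) := Set.nonempty_Icc.2 (hab n).1.le |>.to_subtype
    refine ciSup_le fun t => ?_
    have h2 := hdist n t t.2
    have : edist (γ (t:ℝ)) p ≤ V n := by
      calc edist (γ (t:ℝ)) p ≤ 2 * edist (γ (t:ℝ)) p := by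
            nth_rewrite 1 [← one_mul (edist (γ (t:ℝ)) p)]
            exact mul_le_mul_left one_le_two _
        _ ≤ V n := h2
    rw [dist_edist]
    exact ENNReal.toReal_mono (hVtop n) this
  have hge : ∀ n, 0 ≤ (⨆ t : Icc (a n) (b n), dist (γ (t : ℝ)) p) :=
    fun n => Real.iSup_nonneg fun t => dist_nonneg
  exact squeeze_zero hge hle hVr
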